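/- arXiv:math/0009131 — 2 statements merged into one kernel-verified Lean document; each statement's English description precedes it below -/
import Mathlib

section
/- For every n ≥ 1, in the group ring ℤ[S_{n+1}] one has ε_{n+1} − ι(ε_n) = (−τ_{n+1} + ι(τ_n)) ∪ ι(ε_n), where ∪ denotes the cup product. -/
noncomputable section

/-- `permDeg π` is the minimal number of transpositions whose product is `π`. -/
def permDeg {n : ℕ} (π : Equiv.Perm (Fin n)) : ℕ :=
  sInf {d | ∃ l : List (Equiv.Perm (Fin n)),
    (∀ t ∈ l, t.IsSwap) ∧ l.prod = π ∧ l.length = d}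

/-- The cup product on the group ring `ℤ[S_n]`, extended bilinearly from
`σ ∪ π = σπ` if `deg σ + deg π = deg (σπ)` and `0` otherwise. -/
def cup {n : ℕ} (f g : MonoidAlgebra ℤ (Equiv.Perm (Fin n))) :
    MonoidAlgebra ℤ (Equiv.Perm (Fin n)) :=
  f.coeff.sum fun σ a => g.coeff.sum fun π b =>
    if permDeg σ + permDeg π = permDeg (σ * π)
    then MonoidAlgebra.single (σ * π) (a * b) else 0

/-- `tau n` is the sum of all transpositions in `S_n`, as an element of `ℤ[S_n]`. -/
def tau (n : ℕ) : MonoidAlgebra ℤ (Equiv.Perm (Fin n)) :=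
  letI := Classical.decPred (Equiv.Perm.IsSwap : Equiv.Perm (Fin n) → Prop)
  ∑ σ ∈ Finset.univ.filter (fun σ : Equiv.Perm (Fin n) => σ.IsSwap),
    MonoidAlgebra.single σ (1 : ℤ)

/-- `eps n` is the alternating element `Σ_π sgn(π) π` of `ℤ[S_n]`. -/
def eps (n : ℕ) : MonoidAlgebra ℤ (Equiv.Perm (Fin n)) :=
  ∑ π : Equiv.Perm (Fin n),
    MonoidAlgebra.single π ((Equiv.Perm.sign π : ℤˣ) : ℤ)

/-- The standard inclusion `S_n ⊂ S_{n+1}` (permutations fixing the last letter). -/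
def iotaPerm (n : ℕ) (π : Equiv.Perm (Fin n)) : Equiv.Perm (Fin (n + 1)) :=
  π.viaFintypeEmbedding Fin.castSuccEmb

/-- The induced map `ι : ℤ[S_n] → ℤ[S_{n+1}]`. -/
def iota (n : ℕ) (f : MonoidAlgebra ℤ (Equiv.Perm (Fin n))) :
    MonoidAlgebra ℤ (Equiv.Perm (Fin (n + 1))) :=
  MonoidAlgebra.mapDomain (iotaPerm n) f


namespace PermDegAux


open Equiv Equiv.Perm Module Submodule

variable {m : ℕ}

/-- Fixed "functions" subspace of a permutation acting on `Fin m → ℚ`. -/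
def Fix (σ : Perm (Fin m)) : Submodule ℚ (Fin m → ℚ) where
  carrier := {f | ∀ y, f (σ y) = f y}
  add_mem' := by intro f g hf hg y; simp [hf y, hg y]
  zero_mem' := by intro y; simp
  smul_mem' := by intro c f hf y; simp [hf y]

lemma mem_Fix {σ : Perm (Fin m)} {f : Fin m → ℚ} : f ∈ Fix σ ↔ ∀ y, f (σ y) = f y := Iff.rfl

lemma Fix_one : Fix (1 : Perm (Fin m)) = ⊤ := by
  ext f; simp [mem_Fix]

def FixDim (σ : Perm (Fin m)) : ℕ := finrank ℚ (Fix σ)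

lemma FixDim_le (σ : Perm (Fin m)) : FixDim σ ≤ m := by
  have := Submodule.finrank_le (Fix σ)
  rwa [Module.finrank_fintype_fun_eq_card, Fintype.card_fin] at this

lemma FixDim_one : FixDim (1 : Perm (Fin m)) = m := by
  rw [FixDim, Fix_one, finrank_top, Module.finrank_fintype_fun_eq_card, Fintype.card_fin]

lemma FixDim_swap_ge {a b : Fin m} (hab : a ≠ b) : m - 1 ≤ FixDim (Equiv.swap a b) := by
  set φ : (Fin m → ℚ) →ₗ[ℚ] ℚ := (LinearMap.proj a : (Fin m → ℚ) →ₗ[ℚ] ℚ) - (LinearMap.proj b : (Fin m → ℚ) →ₗ[ℚ] ℚ) with hφ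
  have hker : LinearMap.ker φ ≤ Fix (Equiv.swap a b) := by
    intro f hf y
    have hfab : f a = f b := by
      have : φ f = 0 := hf
      simpa [hφ, sub_eq_zero] using this
    rcases eq_or_ne y a with rfl | hya
    · simpa [Equiv.swap_apply_left] using hfab.symm
    rcases eq_or_ne y b with rfl | hyb
    · simpa [Equiv.swap_apply_right] using hfab
    · rw [Equiv.swap_apply_of_ne_of_ne hya hyb]
  have h1 : finrank ℚ (LinearMap.range φ) + finrank ℚ (LinearMap.ker φ)
      = finrank ℚ (Fin m → ℚ) := LinearMap.finrank_range_add_finrank_ker φ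
  have h2 : finrank ℚ (LinearMap.range φ) ≤ 1 := by
    have := Submodule.finrank_le (LinearMap.range φ)
    simpa using this
  have h3 : finrank ℚ (LinearMap.ker φ) ≤ FixDim (Equiv.swap a b) :=
    Submodule.finrank_mono hker
  rw [Module.finrank_fintype_fun_eq_card, Fintype.card_fin] at h1
  omega

/-- Fixed spaces intersect into the fixed space of the product. -/
lemma Fix_inf_le (σ π : Perm (Fin m)) : Fix σ ⊓ Fix π ≤ Fix (σ * π) := by
  intro f hf y
  have h1 : ∀ y, f (σ y) = f y := hf.1
  have h2 : ∀ y, f (π y) = f y := hf.2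
  simp [Perm.mul_apply, h1, h2]

lemma FixDim_mul (σ π : Perm (Fin m)) : FixDim σ + FixDim π ≤ m + FixDim (σ * π) := by
  have h0 := Submodule.finrank_sup_add_finrank_inf_eq (Fix σ) (Fix π)
  have h1 : finrank ℚ ((Fix σ) ⊓ (Fix π) : Submodule ℚ (Fin m → ℚ)) ≤ FixDim (σ * π) :=
    Submodule.finrank_mono (Fix_inf_le σ π)
  have h2 : finrank ℚ ((Fix σ) ⊔ (Fix π) : Submodule ℚ (Fin m → ℚ)) ≤ m := by
    have := Submodule.finrank_le ((Fix σ) ⊔ (Fix π) : Submodule ℚ (Fin m → ℚ))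
    rwa [Module.finrank_fintype_fun_eq_card, Fintype.card_fin] at this
  unfold FixDim at *
  omega


/-- Key strict inclusion: multiplying by `swap x (σ x)` (which kills the movement at `x`)
strictly enlarges the fixed space. -/
lemma Fix_lt {σ : Perm (Fin m)} {x : Fin m} (hx : σ x ≠ x) :
    Fix σ < Fix (Equiv.swap x (σ x) * σ) := by
  set ρ := Equiv.swap x (σ x) * σ with hρ
  have hle : Fix σ ≤ Fix ρ := by
    intro f hf y
    have hf' : ∀ y, f (σ y) = f y := hf
    have hft : ∀ z, f (Equiv.swap x (σ x) z) = f z := by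
      intro z
      rcases eq_or_ne z x with rfl | hzx
      · rw [Equiv.swap_apply_left]; exact hf' z
      rcases eq_or_ne z (σ x) with rfl | hzs
      · rw [Equiv.swap_apply_right]; exact (hf' x).symm
      · rw [Equiv.swap_apply_of_ne_of_ne hzx hzs]
    have : ρ y = Equiv.swap x (σ x) (σ y) := rfl
    rw [this, hft, hf']
  refine lt_of_le_of_ne hle ?_
  intro heq
  -- δ_x is fixed by ρ but not by σ
  have hδρ : (Pi.single x (1:ℚ)) ∈ Fix ρ := by
    intro y
    have hρx : ρ x = x := by
      simp [hρ, Perm.mul_apply, Equiv.swap_apply_right]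
    rcases eq_or_ne y x with rfl | hyx
    · rw [hρx]
    · have : ρ y ≠ x := fun h => hyx (by
        have := congrArg ρ.symm h
        rwa [Equiv.symm_apply_apply, ← hρx, Equiv.symm_apply_apply] at this)
      rw [Pi.single_eq_of_ne this, Pi.single_eq_of_ne hyx]
  have hδσ : (Pi.single x (1:ℚ)) ∉ Fix σ := by
    intro h
    have h1 := h (σ.symm x)
    rw [Equiv.apply_symm_apply] at h1
    have h2 : σ.symm x ≠ x := fun hc => hx (by conv_lhs => rw [← hc]; rw [Equiv.apply_symm_apply])
    rw [Pi.single_eq_same, Pi.single_eq_of_ne h2] at h1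
    exact one_ne_zero h1
  rw [← heq] at hδρ
  exact hδσ hδρ

lemma FixDim_swap_mul_lt {σ : Perm (Fin m)} {x : Fin m} (hx : σ x ≠ x) :
    FixDim σ + 1 ≤ FixDim (Equiv.swap x (σ x) * σ) :=
  Submodule.finrank_lt_finrank_of_lt (Fix_lt hx)

end PermDegAux

namespace PermDegAux

open Equiv Equiv.Perm Module Submodule

variable {m : ℕ}

lemma degSet_nonempty (σ : Perm (Fin m)) :
    {d | ∃ l : List (Perm (Fin m)),
      (∀ t ∈ l, t.IsSwap) ∧ l.prod = σ ∧ l.length = d}.Nonempty := by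
  obtain ⟨l, hprod, hswap⟩ := (Equiv.Perm.truncSwapFactors σ).out
  exact ⟨l.length, l, hswap, hprod, rfl⟩

lemma permDeg_le {σ : Perm (Fin m)} {l : List (Perm (Fin m))}
    (hswap : ∀ t ∈ l, t.IsSwap) (hprod : l.prod = σ) : permDeg σ ≤ l.length :=
  Nat.sInf_le ⟨l, hswap, hprod, rfl⟩

lemma permDeg_spec (σ : Perm (Fin m)) :
    ∃ l : List (Perm (Fin m)), (∀ t ∈ l, t.IsSwap) ∧ l.prod = σ ∧ l.length = permDeg σ :=
  Nat.sInf_mem (degSet_nonempty σ)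

lemma permDeg_one : permDeg (1 : Perm (Fin m)) = 0 :=
  Nat.le_zero.mp (permDeg_le (l := []) (by simp) (by simp))

lemma permDeg_isSwap {σ : Perm (Fin m)} (h : σ.IsSwap) : permDeg σ = 1 := by
  have hle : permDeg σ ≤ 1 := permDeg_le (l := [σ]) (by simpa) (by simp)
  have hne : σ ≠ 1 := by
    obtain ⟨a, b, hab, rfl⟩ := h
    exact fun h => hab (Equiv.swap_eq_one_iff.mp h)
  have : permDeg σ ≠ 0 := by
    intro h0
    obtain ⟨l, _, hprod, hlen⟩ := permDeg_spec σ
    rw [h0, List.length_eq_zero_iff] at hlen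
    subst hlen
    exact hne (by simpa using hprod.symm)
  omega

/-- Lower bound: any product of `k` swaps has fixed space of codimension at most `k`. -/
lemma lower_list : ∀ (l : List (Perm (Fin m))), (∀ t ∈ l, t.IsSwap) →
    m ≤ l.length + FixDim l.prod := by
  intro l
  induction l with
  | nil => intro _; simp [FixDim_one]
  | cons t l ih =>
    intro h
    have ht : t.IsSwap := h t List.mem_cons_self
    have hl : ∀ u ∈ l, u.IsSwap := fun u hu => h u (List.mem_cons_of_mem t hu)
    have h1 := ih hl
    obtain ⟨a, b, hab, rfl⟩ := ht
    have h2 := FixDim_swap_ge (m := m) hab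
    have h3 := FixDim_mul (Equiv.swap a b) l.prod
    have h4 := FixDim_le (m := m) (Equiv.swap a b * l.prod)
    simp only [List.prod_cons, List.length_cons]
    omega

lemma permDeg_lower (σ : Perm (Fin m)) : m ≤ permDeg σ + FixDim σ := by
  obtain ⟨l, hswap, hprod, hlen⟩ := permDeg_spec σ
  have := lower_list l hswap
  rw [hprod, hlen] at this
  exact this

lemma permDeg_le_swap_mul {σ : Perm (Fin m)} {x : Fin m} (hx : σ x ≠ x) :
    permDeg σ ≤ permDeg (Equiv.swap x (σ x) * σ) + 1 := by
  obtain ⟨l, hswap, hprod, hlen⟩ := permDeg_spec (Equiv.swap x (σ x) * σ)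
  have hprod' : (Equiv.swap x (σ x) :: l).prod = σ := by
    rw [List.prod_cons, hprod, ← mul_assoc, Equiv.swap_mul_self, one_mul]
  have := permDeg_le (l := Equiv.swap x (σ x) :: l)
    (by
      intro t ht
      rcases List.mem_cons.mp ht with rfl | ht
      · exact ⟨x, σ x, Ne.symm hx, rfl⟩
      · exact hswap t ht) hprod'
  simp only [List.length_cons, hlen] at this
  exact this

lemma permDeg_upper : ∀ k, ∀ σ : Perm (Fin m), σ.support.card = k →
    permDeg σ + FixDim σ ≤ m := by
  intro k
  induction k using Nat.strong_induction_on with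
  | _ k ih =>
    intro σ hind
    rcases eq_or_ne σ 1 with rfl | hσ
    · rw [permDeg_one, FixDim_one]; omega
    · obtain ⟨x, hx⟩ : ∃ x, σ x ≠ x := by
        by_contra h
        push_neg at h
        exact hσ (Equiv.ext h)
      set ρ := Equiv.swap x (σ x) * σ with hρ
      have hcard : ρ.support.card < σ.support.card := Equiv.Perm.card_support_swap_mul hx
      have hupper : permDeg ρ + FixDim ρ ≤ m := by
        subst hind
        exact ih ρ.support.card hcard ρ rfl
      have hdim : FixDim σ + 1 ≤ FixDim ρ := FixDim_swap_mul_lt hx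
      have hdeg : permDeg σ ≤ permDeg ρ + 1 := permDeg_le_swap_mul hx
      omega

/-- Main theorem: `permDeg σ = m - dim Fix σ`. -/
lemma permDeg_add_FixDim (σ : Perm (Fin m)) : permDeg σ + FixDim σ = m :=
  le_antisymm (permDeg_upper σ.support.card σ rfl) (permDeg_lower σ)

/-- The key exact computation. -/
lemma permDeg_swap_mul {σ : Perm (Fin m)} {x : Fin m} (hx : σ x ≠ x) :
    permDeg (Equiv.swap x (σ x) * σ) + 1 = permDeg σ := by
  have h1 := permDeg_add_FixDim σ
  have h2 := permDeg_add_FixDim (Equiv.swap x (σ x) * σ)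
  have h3 := FixDim_swap_mul_lt hx
  have h4 := permDeg_le_swap_mul hx
  omega

end PermDegAux

namespace PermDegAux

open Equiv Equiv.Perm

variable {n : ℕ}

lemma castSucc_ne_last (j : Fin n) : Fin.castSucc j ≠ Fin.last n :=
  (Fin.castSucc_lt_last j).ne

lemma last_not_mem_range : Fin.last n ∉ Set.range (Fin.castSuccEmb : Fin n ↪ Fin (n+1)) := by
  rintro ⟨j, hj⟩
  exact castSucc_ne_last j (by simpa using hj)

lemma iotaPerm_castSucc (π : Perm (Fin n)) (j : Fin n) :
    iotaPerm n π (Fin.castSucc j) = Fin.castSucc (π j) := by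
  have := Equiv.Perm.viaFintypeEmbedding_apply_image (e := π) (f := Fin.castSuccEmb) j
  simpa [iotaPerm] using this

lemma iotaPerm_last (π : Perm (Fin n)) : iotaPerm n π (Fin.last n) = Fin.last n :=
  Equiv.Perm.viaFintypeEmbedding_apply_notMem_range (e := π) (f := Fin.castSuccEmb)
    last_not_mem_range

lemma iotaPerm_injective : Function.Injective (iotaPerm n) := by
  intro π π' h
  ext j
  have : iotaPerm n π (Fin.castSucc j) = iotaPerm n π' (Fin.castSucc j) := by rw [h]
  rw [iotaPerm_castSucc, iotaPerm_castSucc] at this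
  exact congrArg Fin.val (Fin.castSucc_injective n this)

lemma iotaPerm_swap {a b : Fin n} (hab : a ≠ b) :
    iotaPerm n (Equiv.swap a b) = Equiv.swap (Fin.castSucc a) (Fin.castSucc b) := by
  ext x
  refine Fin.lastCases ?_ ?_ x
  · rw [iotaPerm_last, Equiv.swap_apply_of_ne_of_ne (castSucc_ne_last a).symm
      (castSucc_ne_last b).symm]
  · intro j
    rw [iotaPerm_castSucc]
    rcases eq_or_ne j a with rfl | hja
    · rw [Equiv.swap_apply_left, Equiv.swap_apply_left]
    rcases eq_or_ne j b with rfl | hjb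
    · rw [Equiv.swap_apply_right, Equiv.swap_apply_right]
    · rw [Equiv.swap_apply_of_ne_of_ne hja hjb, Equiv.swap_apply_of_ne_of_ne
        (fun h => hja (Fin.castSucc_injective n h)) (fun h => hjb (Fin.castSucc_injective n h))]

lemma isSwap_iotaPerm {τ : Perm (Fin n)} (h : τ.IsSwap) : (iotaPerm n τ).IsSwap := by
  obtain ⟨a, b, hab, rfl⟩ := h
  exact ⟨Fin.castSucc a, Fin.castSucc b, fun hc => hab (Fin.castSucc_injective n hc),
    iotaPerm_swap hab⟩

lemma sign_iotaPerm (π : Perm (Fin n)) :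
    Equiv.Perm.sign (iotaPerm n π) = Equiv.Perm.sign π :=
  Equiv.Perm.viaFintypeEmbedding_sign π Fin.castSuccEmb

/-- The key cup-condition lemma. -/
lemma permDeg_swap_mul_iotaPerm (i : Fin n) (π : Perm (Fin n)) :
    permDeg (Equiv.swap (Fin.castSucc i) (Fin.last n) * iotaPerm n π) =
      permDeg (iotaPerm n π) + 1 := by
  set σ := Equiv.swap (Fin.castSucc i) (Fin.last n) * iotaPerm n π with hσ
  have hσlast : σ (Fin.last n) = Fin.castSucc i := by
    rw [hσ, Perm.mul_apply, iotaPerm_last, Equiv.swap_apply_right]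
  have hmove : σ (Fin.last n) ≠ Fin.last n := by
    rw [hσlast]; exact castSucc_ne_last i
  have key := permDeg_swap_mul (x := Fin.last n) hmove
  rw [hσlast] at key
  have : Equiv.swap (Fin.last n) (Fin.castSucc i) * σ = iotaPerm n π := by
    rw [Equiv.swap_comm, hσ, ← mul_assoc, Equiv.swap_mul_self, one_mul]
  rw [this] at key
  exact key.symm

end PermDegAux

namespace PermDegAux
open Equiv Equiv.Perm Finset

variable {m n : ℕ}

lemma MA_single (g : Perm (Fin m)) (a : ℤ) :
    (MonoidAlgebra.single g a).coeff = Finsupp.single g a := rfl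

lemma MA_mapDomain_finset_sum {α β ι : Type*} (f : α → β) (s : Finset ι)
    (F : ι → MonoidAlgebra ℤ α) :
    MonoidAlgebra.mapDomain f (∑ i ∈ s, F i) = ∑ i ∈ s, MonoidAlgebra.mapDomain f (F i) := by
  induction s using Finset.cons_induction with
  | empty => simp [MonoidAlgebra.mapDomain_zero]
  | cons a s ha ih => rw [Finset.sum_cons, Finset.sum_cons, MonoidAlgebra.mapDomain_add, ih]

lemma cup_single_single (σ π : Perm (Fin m)) (a b : ℤ) :
    cup (MonoidAlgebra.single σ a) (MonoidAlgebra.single π b) =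
      if permDeg σ + permDeg π = permDeg (σ * π)
      then MonoidAlgebra.single (σ * π) (a * b) else 0 := by
  unfold cup
  rw [MA_single, MA_single,
    Finsupp.sum_single_index (by rw [Finsupp.sum_single_index] <;> simp [MA_single]),
    Finsupp.sum_single_index (by simp [MA_single])]

lemma cup_sum_left {ι : Type*} (s : Finset ι) (F : ι → MonoidAlgebra ℤ (Perm (Fin m)))
    (g : MonoidAlgebra ℤ (Perm (Fin m))) :
    cup (∑ i ∈ s, F i) g = ∑ i ∈ s, cup (F i) g := by
  unfold cup
  rw [MonoidAlgebra.coeff_sum, ← Finsupp.sum_finset_sum_index]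
  · intro σ
    simp [MA_single]
  · intro σ a₁ a₂
    rw [← Finsupp.sum_add]
    apply Finsupp.sum_congr
    intro π _
    split_ifs with h
    · rw [add_mul, MonoidAlgebra.single_add]
    · simp

lemma cup_sum_right {ι : Type*} (s : Finset ι) (f : MonoidAlgebra ℤ (Perm (Fin m)))
    (G : ι → MonoidAlgebra ℤ (Perm (Fin m))) :
    cup f (∑ i ∈ s, G i) = ∑ i ∈ s, cup f (G i) := by
  unfold cup
  have key : ∀ (σ : Perm (Fin m)) (a : ℤ),
      (∑ i ∈ s, G i).coeff.sum (fun π b => if permDeg σ + permDeg π = permDeg (σ * π)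
        then MonoidAlgebra.single (σ * π) (a * b) else 0)
      = ∑ i ∈ s, (G i).coeff.sum (fun π b => if permDeg σ + permDeg π = permDeg (σ * π)
        then MonoidAlgebra.single (σ * π) (a * b) else 0) := by
    intro σ a
    rw [MonoidAlgebra.coeff_sum, Finsupp.sum_finset_sum_index]
    · intro π
      simp [MA_single]
    · intro π b₁ b₂
      split_ifs with h
      · rw [mul_add, MonoidAlgebra.single_add]
      · simp
  rw [Finsupp.sum]
  refine Eq.trans (Finset.sum_congr rfl fun σ _ => key σ (f.coeff σ)) ?_
  rw [Finset.sum_comm]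
  simp [Finsupp.sum]

/-- Decomposition of the set of transpositions of `S_{n+1}`. -/
lemma swap_filter_decomp {inst : DecidablePred (IsSwap : Perm (Fin (n+1)) → Prop)}
    {inst2 : DecidablePred (IsSwap : Perm (Fin n) → Prop)} :
    (Finset.univ.filter (fun σ : Perm (Fin (n+1)) => σ.IsSwap)) =
      ((Finset.univ.filter (fun τ : Perm (Fin n) => τ.IsSwap)).image (iotaPerm n)) ∪
        (Finset.univ.image (fun i : Fin n => Equiv.swap (Fin.castSucc i) (Fin.last n))) := by
  ext σ
  simp only [Finset.mem_union, Finset.mem_image, Finset.mem_filter, Finset.mem_univ, true_and]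
  constructor
  · rintro ⟨a, b, hab, rfl⟩
    rcases eq_or_ne a (Fin.last n) with rfl | ha
    · right
      obtain ⟨b', rfl⟩ := Fin.exists_castSucc_eq.mpr hab.symm
      exact ⟨b', (Equiv.swap_comm _ _)⟩
    rcases eq_or_ne b (Fin.last n) with rfl | hb
    · right
      obtain ⟨a', rfl⟩ := Fin.exists_castSucc_eq.mpr ha
      exact ⟨a', rfl⟩
    · left
      obtain ⟨a', rfl⟩ := Fin.exists_castSucc_eq.mpr ha
      obtain ⟨b', rfl⟩ := Fin.exists_castSucc_eq.mpr hb
      have hab' : a' ≠ b' := fun h => hab (by rw [h])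
      exact ⟨Equiv.swap a' b', ⟨a', b', hab', rfl⟩, iotaPerm_swap hab'⟩
  · rintro (⟨τ, hτ, rfl⟩ | ⟨i, rfl⟩)
    · exact isSwap_iotaPerm hτ
    · exact ⟨_, _, castSucc_ne_last i, rfl⟩

lemma swapAtLast_injective :
    Function.Injective (fun i : Fin n => Equiv.swap (Fin.castSucc i) (Fin.last n)) := by
  intro i j h
  have := congrArg (fun σ : Perm (Fin (n+1)) => σ (Fin.last n)) h
  simp only [Equiv.swap_apply_right] at this
  exact Fin.castSucc_injective n this

lemma tau_succ :
    tau (n + 1) = iota n (tau n) +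
      ∑ i : Fin n, MonoidAlgebra.single (Equiv.swap (Fin.castSucc i) (Fin.last n)) (1 : ℤ) := by
  unfold tau iota
  rw [MA_mapDomain_finset_sum]
  simp only [MonoidAlgebra.mapDomain_single]
  rw [swap_filter_decomp]
  rw [Finset.sum_union]
  · rw [Finset.sum_image (fun τ _ τ' _ h => iotaPerm_injective h),
      Finset.sum_image (fun i _ j _ h => swapAtLast_injective h)]
  · rw [Finset.disjoint_left]
    rintro σ hσ hσ'
    simp only [Finset.mem_image, Finset.mem_filter] at hσ hσ'
    obtain ⟨τ, _, rfl⟩ := hσ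
    obtain ⟨i, _, hi⟩ := hσ'
    have h1 : iotaPerm n τ (Fin.last n) = Fin.last n := iotaPerm_last τ
    rw [← hi, Equiv.swap_apply_right] at h1
    exact castSucc_ne_last i h1

def lastF (p : Fin n × Perm (Fin n)) : Perm (Fin (n + 1)) :=
  Equiv.swap (Fin.castSucc p.1) (Fin.last n) * iotaPerm n p.2

lemma lastF_injective : Function.Injective (lastF (n := n)) := by
  intro p q h
  have hlast : ∀ r : Fin n × Perm (Fin n), lastF r (Fin.last n) = Fin.castSucc r.1 := by
    intro r
    simp [lastF, Perm.mul_apply, iotaPerm_last, Equiv.swap_apply_right]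
  have h1 : Fin.castSucc p.1 = Fin.castSucc q.1 := by
    rw [← hlast p, ← hlast q, h]
  have h1' : p.1 = q.1 := Fin.castSucc_injective n h1
  have h2 : iotaPerm n p.2 = iotaPerm n q.2 := by
    have := h
    unfold lastF at this
    rw [h1'] at this
    exact mul_left_cancel this
  exact Prod.ext h1' (iotaPerm_injective h2)

lemma univ_perm_decomp :
    (Finset.univ : Finset (Perm (Fin (n+1)))) =
      (Finset.univ.image (iotaPerm n)) ∪ (Finset.univ.image (lastF (n := n))) := by
  have hdisj : Disjoint (Finset.univ.image (iotaPerm (n := n)))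
      (Finset.univ.image (lastF (n := n))) := by
    rw [Finset.disjoint_left]
    rintro σ hσ hσ'
    simp only [Finset.mem_image, Finset.mem_univ, true_and] at hσ hσ'
    obtain ⟨τ, rfl⟩ := hσ
    obtain ⟨p, hp⟩ := hσ'
    have h1 : iotaPerm n τ (Fin.last n) = Fin.last n := iotaPerm_last τ
    rw [← hp] at h1
    simp only [lastF, Perm.mul_apply, iotaPerm_last, Equiv.swap_apply_right] at h1
    exact castSucc_ne_last p.1 h1
  symm
  apply Finset.eq_univ_of_card
  rw [Finset.card_union_of_disjoint hdisj,
    Finset.card_image_of_injective _ iotaPerm_injective,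
    Finset.card_image_of_injective _ lastF_injective]
  simp only [Finset.card_univ, Fintype.card_perm, Fintype.card_prod, Fintype.card_fin]
  rw [Nat.factorial_succ]
  ring

lemma sign_lastF (p : Fin n × Perm (Fin n)) :
    Equiv.Perm.sign (lastF p) = -Equiv.Perm.sign p.2 := by
  unfold lastF
  rw [Equiv.Perm.sign_mul, Equiv.Perm.sign_swap (castSucc_ne_last p.1), sign_iotaPerm,
    neg_one_mul]

end PermDegAux

/-- For every `n ≥ 1`, in `ℤ[S_{n+1}]` one has
`ε_{n+1} − ι(ε_n) = (−τ_{n+1} + ι(τ_n)) ∪ ι(ε_n)`. -/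
theorem eps_succ_sub_iota_eps (n : ℕ) (hn : 1 ≤ n) :
    eps (n + 1) - iota n (eps n) =
      cup (-tau (n + 1) + iota n (tau n)) (iota n (eps n)) := by
  classical
  open PermDegAux Equiv Equiv.Perm in
  -- rewrite the first cup argument
  have harg : -tau (n + 1) + iota n (tau n) =
      ∑ i : Fin n,
        MonoidAlgebra.single (Equiv.swap (Fin.castSucc i) (Fin.last n)) (-1 : ℤ) := by
    rw [tau_succ]
    have h1 : ∀ A S : MonoidAlgebra ℤ (Equiv.Perm (Fin (n+1))), -(A + S) + A = -S := by
      intro A S; abel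
    rw [h1, ← Finset.sum_neg_distrib]
    apply Finset.sum_congr rfl
    intro i _
    rw [MonoidAlgebra.single_neg]
  have hiota_eps : iota n (eps n) =
      ∑ π : Equiv.Perm (Fin n),
        MonoidAlgebra.single (iotaPerm n π) ((Equiv.Perm.sign π : ℤˣ) : ℤ) := by
    unfold iota eps
    rw [MA_mapDomain_finset_sum]
    simp only [MonoidAlgebra.mapDomain_single]
  -- RHS computation
  rw [harg, hiota_eps, cup_sum_left]
  have hterm : ∀ i : Fin n,
      cup (MonoidAlgebra.single (Equiv.swap (Fin.castSucc i) (Fin.last n)) (-1 : ℤ))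
        (∑ π : Equiv.Perm (Fin n),
          MonoidAlgebra.single (iotaPerm n π) ((Equiv.Perm.sign π : ℤˣ) : ℤ)) =
      ∑ π : Equiv.Perm (Fin n),
        MonoidAlgebra.single (Equiv.swap (Fin.castSucc i) (Fin.last n) * iotaPerm n π)
          (-((Equiv.Perm.sign π : ℤˣ) : ℤ)) := by
    intro i
    rw [cup_sum_right]
    apply Finset.sum_congr rfl
    intro π _
    rw [cup_single_single]
    rw [if_pos]
    · rw [neg_one_mul]
    · rw [permDeg_swap_mul_iotaPerm i π,
        permDeg_isSwap ⟨_, _, castSucc_ne_last i, rfl⟩, add_comm]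
  simp only [hterm]
  -- LHS computation
  have heps : eps (n + 1) =
      (∑ π : Equiv.Perm (Fin n),
        MonoidAlgebra.single (iotaPerm n π) ((Equiv.Perm.sign π : ℤˣ) : ℤ)) +
      ∑ p : Fin n × Equiv.Perm (Fin n),
        MonoidAlgebra.single (lastF p) (-((Equiv.Perm.sign p.2 : ℤˣ) : ℤ)) := by
    unfold eps
    rw [univ_perm_decomp (n := n), Finset.sum_union, Finset.sum_image
      (fun τ _ τ' _ h => iotaPerm_injective h),
      Finset.sum_image (fun p _ q _ h => lastF_injective h)]
    · congr 1
      · apply Finset.sum_congr rfl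
        intro π _
        rw [sign_iotaPerm]
      · apply Finset.sum_congr rfl
        intro p _
        rw [sign_lastF]
        simp
    · rw [Finset.disjoint_left]
      rintro σ hσ hσ'
      simp only [Finset.mem_image, Finset.mem_univ, true_and] at hσ hσ'
      obtain ⟨τ, rfl⟩ := hσ
      obtain ⟨p, hp⟩ := hσ'
      have h1 : iotaPerm n τ (Fin.last n) = Fin.last n := iotaPerm_last τ
      rw [← hp] at h1
      simp only [lastF, Equiv.Perm.mul_apply, iotaPerm_last, Equiv.swap_apply_right] at h1
      exact castSucc_ne_last p.1 h1
  rw [heps, add_sub_cancel_left]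
  rw [← Finset.univ_product_univ, Finset.sum_product]
  rfl

end
end

section
/- For every n ≥ 1, the restriction map ρ : C(S_n) → C(S_{n−1}), which restricts an integer-valued class function on S_n along the standard inclusion S_{n−1} ⊂ S_n, is a surjective, degree-preserving ring homomorphism with respect to the cup product, and satisfies ρ(ε_n) = ε_{n−1}. -/
noncomputable section

/-- `f ∈ ℤ[S_n]` is a class function if its coefficients are constant on
conjugacy classes. -/
def IsClassFun {n : ℕ} (f : MonoidAlgebra ℤ (Equiv.Perm (Fin n))) : Prop :=
  ∀ σ π : Equiv.Perm (Fin n), f.coeff (σ * π * σ⁻¹) = f.coeff π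

/-- The restriction map `ρ : C(S_{n+1}) → C(S_n)` along the standard
inclusion `S_n ⊂ S_{n+1}`. -/
def rho (n : ℕ) (f : MonoidAlgebra ℤ (Equiv.Perm (Fin (n + 1)))) :
    MonoidAlgebra ℤ (Equiv.Perm (Fin n)) :=
  MonoidAlgebra.ofCoeff (Finsupp.equivFunOnFinite.symm fun π => f.coeff (iotaPerm n π))

open Equiv Equiv.Perm Function
section QuotCard
variable {α : Type*}
def qmap (r s : Setoid α) (h : ∀ x y, r.r x y → s.r x y) : Quotient r → Quotient s :=
  Quotient.lift (fun x => Quotient.mk s x) fun a b hab => Quotient.sound (h a b hab)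
lemma qmap_mk (r s : Setoid α) (h) (x : α) : qmap r s h (Quotient.mk r x) = Quotient.mk s x := rfl

lemma quot_sound {r : Setoid α} {x y : α} (h : r.r x y) :
    Quotient.mk r x = Quotient.mk r y := Quotient.sound h

lemma quot_exact {r : Setoid α} {x y : α} (h : Quotient.mk r x = Quotient.mk r y) :
    r.r x y := Quotient.exact h
lemma qmap_surj (r s : Setoid α) (h) : Surjective (qmap r s h) := by
  rintro ⟨x⟩; exact ⟨Quotient.mk r x, rfl⟩
lemma card_quot_le (r s : Setoid α) [Finite α] (h : ∀ x y, r.r x y → s.r x y) :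
    Nat.card (Quotient s) ≤ Nat.card (Quotient r) :=
  Nat.card_le_card_of_surjective _ (qmap_surj r s h)
lemma card_le_card_compl_singleton_add_one {β : Type*} [Finite β] (v : β) :
    Nat.card β ≤ Nat.card {q : β // q ≠ v} + 1 := by
  classical
  haveI := Fintype.ofFinite β
  have hinj : Injective (fun b : β => if h : b = v then (none : Option {q : β // q ≠ v})
      else some ⟨b, h⟩) := by
    intro b c hbc
    by_cases hb : b = v <;> by_cases hc : c = v <;> simp [hb, hc] at hbc ⊢
    · exact hbc
  calc Nat.card β ≤ Nat.card (Option {q : β // q ≠ v}) := Nat.card_le_card_of_injective _ hinj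
    _ = Nat.card {q : β // q ≠ v} + 1 := Finite.card_option
lemma card_lt_of_surj_not_inj {β γ : Type*} [Finite β] (f : β → γ) (hs : Surjective f)
    (hni : ¬ Injective f) : Nat.card γ < Nat.card β := by
  have h1 : Nat.card γ ≤ Nat.card β := Nat.card_le_card_of_surjective f hs
  rcases h1.lt_or_eq with h | h
  · exact h
  · exact absurd ((Nat.bijective_iff_surjective_and_card f).mpr ⟨hs, h.symm⟩).injective hni
end QuotCard

variable {n : ℕ}

lemma permDeg_le {π : Perm (Fin n)} {l : List (Perm (Fin n))}
    (hs : ∀ t ∈ l, t.IsSwap) (hp : l.prod = π) : permDeg π ≤ l.length :=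
  Nat.sInf_le ⟨l, hs, hp, rfl⟩

lemma exists_minimal_list (π : Perm (Fin n)) :
    ∃ l : List (Perm (Fin n)), (∀ t ∈ l, t.IsSwap) ∧ l.prod = π ∧ l.length = permDeg π := by
  have hne : {d | ∃ l : List (Perm (Fin n)),
      (∀ t ∈ l, t.IsSwap) ∧ l.prod = π ∧ l.length = d}.Nonempty := by
    obtain ⟨l, hl1, hl2⟩ := (truncSwapFactors π).out
    exact ⟨l.length, l, fun t ht => hl2 t ht, hl1, rfl⟩
  exact Nat.sInf_mem hne

lemma permDeg_one : permDeg (1 : Perm (Fin n)) = 0 :=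
  Nat.le_zero.mp (permDeg_le (l := []) (by simp) rfl)

def lstep (l : List (Perm (Fin n))) (x y : Fin n) : Prop := ∃ t ∈ l, t x = y

def LReach (l : List (Perm (Fin n))) (x y : Fin n) : Prop := Relation.EqvGen (lstep l) x y

lemma LReach.refl (l : List (Perm (Fin n))) (x : Fin n) : LReach l x x :=
  Relation.EqvGen.refl x

lemma LReach.symm {l : List (Perm (Fin n))} {x y : Fin n} (h : LReach l x y) : LReach l y x :=
  Relation.EqvGen.symm _ _ h

lemma LReach.trans {l : List (Perm (Fin n))} {x y z : Fin n} (h : LReach l x y)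
    (h' : LReach l y z) : LReach l x z := Relation.EqvGen.trans _ _ _ h h'

def lreach (l : List (Perm (Fin n))) : Setoid (Fin n) :=
  ⟨LReach l, Relation.EqvGen.is_equivalence _⟩

lemma lreach_mono {l : List (Perm (Fin n))} {t : Perm (Fin n)} {x y : Fin n}
    (h : LReach l x y) : LReach (t :: l) x y :=
  Relation.EqvGen.mono (r := lstep l) (p := lstep (t :: l)) (fun _ _ hab => hab.imp fun _ hs => ⟨List.mem_cons_of_mem _ hs.1, hs.2⟩) _ _ h

lemma lreach_prod (l : List (Perm (Fin n))) (x : Fin n) : LReach l x (l.prod x) := by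
  induction l generalizing x with
  | nil => simpa using LReach.refl [] x
  | cons t l ih =>
    have h1 : LReach (t :: l) x (l.prod x) := lreach_mono (ih x)
    have h2 : LReach (t :: l) (l.prod x) (t (l.prod x)) :=
      Relation.EqvGen.rel _ _ ⟨t, List.mem_cons_self, rfl⟩
    simpa [List.prod_cons, Equiv.Perm.mul_apply] using h1.trans h2

lemma forall_zpow_rel {r : Fin n → Fin n → Prop} (hsymm : ∀ {x y}, r x y → r y x)
    (htrans : ∀ {x y z}, r x y → r y z → r x z) (hrefl : ∀ x, r x x)
    (σ : Perm (Fin n)) (h1 : ∀ y, r y (σ y)) :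
    ∀ (i : ℤ) (y : Fin n), r y ((σ ^ i) y) := by
  have h2 : ∀ y, r y (σ⁻¹ y) := fun y => by
    have := h1 (σ⁻¹ y); rw [Equiv.Perm.coe_inv, Equiv.apply_symm_apply] at this; exact hsymm this
  intro i
  induction i using Int.induction_on with
  | zero => simpa using hrefl
  | succ i ih =>
    intro y
    have : (σ ^ ((i : ℤ) + 1)) y = (σ ^ (i : ℤ)) (σ y) := by
      rw [zpow_add_one]; rfl
    rw [this]
    exact htrans (h1 y) (ih (σ y))
  | pred i ih =>
    intro y
    have : (σ ^ (-(i : ℤ) - 1)) y = (σ ^ (-(i : ℤ))) (σ⁻¹ y) := by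
      rw [zpow_sub_one]; rfl
    rw [this]
    exact htrans (h2 y) (ih (σ⁻¹ y))
lemma lreach_of_sameCycle {l : List (Perm (Fin n))} {ρ : Perm (Fin n)} (hp : l.prod = ρ)
    {x y : Fin n} (h : ρ.SameCycle x y) : LReach l x y := by
  obtain ⟨i, hi⟩ := h
  rw [← hi]
  exact forall_zpow_rel (fun h => h.symm) (fun h h' => h.trans h') (LReach.refl l) ρ
    (fun y => by simpa [hp] using lreach_prod l y) i x

lemma lreach_cons_cases {l : List (Perm (Fin n))} {a b : Fin n} {x y : Fin n}
    (h : LReach (Equiv.swap a b :: l) x y) :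
    LReach l x y ∨ ((LReach l x a ∨ LReach l x b) ∧ (LReach l y a ∨ LReach l y b)) := by
  induction h with
  | rel u v huv =>
    obtain ⟨s, hs, hsv⟩ := huv
    rcases List.mem_cons.mp hs with rfl | hs
    · rcases eq_or_ne u a with rfl | hua
      · rw [Equiv.swap_apply_left] at hsv
        subst hsv
        exact Or.inr ⟨Or.inl (LReach.refl l u), Or.inr (LReach.refl l _)⟩
      · rcases eq_or_ne u b with rfl | hub
        · rw [Equiv.swap_apply_right] at hsv
          subst hsv
          exact Or.inr ⟨Or.inr (LReach.refl l u), Or.inl (LReach.refl l _)⟩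
        · rw [Equiv.swap_apply_of_ne_of_ne hua hub] at hsv
          subst hsv
          exact Or.inl (LReach.refl l u)
    · exact Or.inl (Relation.EqvGen.rel _ _ ⟨s, hs, hsv⟩)
  | refl u => exact Or.inl (LReach.refl l u)
  | symm u v _ ih =>
    rcases ih with h | ⟨h1, h2⟩
    · exact Or.inl h.symm
    · exact Or.inr ⟨h2, h1⟩
  | trans u v w _ _ ih1 ih2 =>
    rcases ih1 with h1 | ⟨h1, h1'⟩ <;> rcases ih2 with h2 | ⟨h2, h2'⟩
    · exact Or.inl (h1.trans h2)
    · exact Or.inr ⟨h2.imp (fun h => h1.trans h) (fun h => h1.trans h), h2'⟩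
    · exact Or.inr ⟨h1, h1'.imp (fun h => h2.symm.trans h) (fun h => h2.symm.trans h)⟩
    · exact Or.inr ⟨h1, h2'⟩

lemma card_lreach_le {l : List (Perm (Fin n))} {t : Perm (Fin n)} (ht : t.IsSwap) :
    Nat.card (Quotient (lreach l)) ≤ Nat.card (Quotient (lreach (t :: l))) + 1 := by
  obtain ⟨a, b, hab, rfl⟩ := ht
  set r := lreach l with hr
  set s := lreach (Equiv.swap a b :: l) with hs
  have hmono : ∀ x y, r.r x y → s.r x y := fun x y h => lreach_mono h
  set F : Quotient r → Quotient s := qmap r s hmono with hF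
  set va : Quotient r := Quotient.mk r a with hva
  have hinj : Injective (fun q : {q : Quotient r // q ≠ va} => F q.1) := by
    rintro ⟨q1, hq1⟩ ⟨q2, hq2⟩ hq
    obtain ⟨x, rfl⟩ := Quotient.exists_rep q1
    obtain ⟨y, rfl⟩ := Quotient.exists_rep q2
    simp only [hF, qmap_mk] at hq
    have hxy : s.r x y := quot_exact hq
    have : LReach (Equiv.swap a b :: l) x y := hxy
    rcases lreach_cons_cases this with h | ⟨h1, h2⟩
    · exact Subtype.ext (quot_sound (r := r) h)
    · have hx : LReach l x b := by
        rcases h1 with h1 | h1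
        · exact absurd (quot_sound (r := r) h1) hq1
        · exact h1
      have hy : LReach l y b := by
        rcases h2 with h2 | h2
        · exact absurd (quot_sound (r := r) h2) hq2
        · exact h2
      exact Subtype.ext (quot_sound (r := r) (hx.trans hy.symm))
  calc Nat.card (Quotient r) ≤ Nat.card {q : Quotient r // q ≠ va} + 1 :=
        card_le_card_compl_singleton_add_one va
    _ ≤ Nat.card (Quotient s) + 1 := by
        exact Nat.add_le_add_right (Nat.card_le_card_of_injective _ hinj) 1

lemma card_lreach_ge (l : List (Perm (Fin n))) (hs : ∀ t ∈ l, t.IsSwap) :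
    n ≤ Nat.card (Quotient (lreach l)) + l.length := by
  induction l with
  | nil =>
    have hinj : Injective (Quotient.mk (lreach ([] : List (Perm (Fin n))))) := by
      intro x y h
      have h2 : LReach ([] : List (Perm (Fin n))) x y := quot_exact h
      clear h
      induction h2 with
      | rel u v huv => obtain ⟨s, hs, _⟩ := huv; exact absurd hs List.not_mem_nil
      | refl u => rfl
      | symm u v _ ih => exact ih.symm
      | trans u v w _ _ ih1 ih2 => exact ih1.trans ih2
    have := Nat.card_le_card_of_injective _ hinj
    simpa using this
  | cons t l ih =>
    have h1 := ih (fun s hsl => hs s (List.mem_cons_of_mem _ hsl))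
    have h2 := card_lreach_le (l := l) (hs t (List.mem_cons_self))
    simp only [List.length_cons]
    omega

lemma permDeg_add_card_cycles_le (ρ : Perm (Fin n)) :
    permDeg ρ + Nat.card (Quotient (SameCycle.setoid ρ)) ≤ n := by
  have hcard : ∀ σ : Perm (Fin n), Nat.card (Quotient (SameCycle.setoid σ)) ≤ n := by
    intro σ
    have := Nat.card_le_card_of_surjective (Quotient.mk (SameCycle.setoid σ))
      (Quotient.exists_rep)
    simpa using this
  suffices h : ∀ (k : ℕ) (σ : Perm (Fin n)), σ.support.card ≤ k →
      permDeg σ + Nat.card (Quotient (SameCycle.setoid σ)) ≤ n by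
    exact h ρ.support.card ρ le_rfl
  intro k
  induction k with
  | zero =>
    intro σ hσ
    have : σ = 1 := by
      rw [← Equiv.Perm.support_eq_empty_iff]
      exact Finset.card_eq_zero.mp (Nat.le_zero.mp hσ)
    subst this
    rw [permDeg_one]
    simpa using hcard 1
  | succ k ih =>
    intro σ hσ
    rcases eq_or_ne σ 1 with rfl | hne
    · rw [permDeg_one]; simpa using hcard 1
    · obtain ⟨x, hx⟩ : ∃ x, σ x ≠ x := by
        by_contra h
        push_neg at h
        exact hne (Equiv.ext h)
      set σ' := Equiv.swap x (σ x) * σ with hσ'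
      have hsupp : σ'.support.card < σ.support.card :=
        Equiv.Perm.card_support_swap_mul hx
      have ihσ' := ih σ' (by omega)
      -- permDeg σ ≤ permDeg σ' + 1
      have hdeg : permDeg σ ≤ permDeg σ' + 1 := by
        obtain ⟨l, hl1, hl2, hl3⟩ := exists_minimal_list σ'
        have : (Equiv.swap x (σ x) :: l).prod = σ := by
          rw [List.prod_cons, hl2, hσ', ← mul_assoc, Equiv.swap_mul_self, one_mul]
        have hle := permDeg_le (l := Equiv.swap x (σ x) :: l) ?_ this
        · simpa [hl3] using hle
        · intro t ht
          rcases List.mem_cons.mp ht with rfl | ht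
          · exact ⟨x, σ x, Ne.symm hx, rfl⟩
          · exact hl1 t ht
      -- cycles of σ' refine cycles of σ
      have haux : ∀ y, σ.SameCycle y (Equiv.swap x (σ x) y) := by
        intro y
        rcases eq_or_ne y x with rfl | hyx
        · rw [Equiv.swap_apply_left]; exact ⟨1, rfl⟩
        · rcases eq_or_ne y (σ x) with rfl | hyσx
          · rw [Equiv.swap_apply_right]; exact (Equiv.Perm.SameCycle.refl σ x).apply_right.symm
          · rw [Equiv.swap_apply_of_ne_of_ne hyx hyσx]
      have hstep : ∀ y, σ.SameCycle y (σ' y) := by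
        intro y
        have h1 : σ.SameCycle y (σ y) := ⟨1, rfl⟩
        exact h1.trans (haux (σ y))
      have hle : ∀ u v, σ'.SameCycle u v → σ.SameCycle u v := by
        intro u v huv
        obtain ⟨i, hi⟩ := huv
        rw [← hi]
        exact forall_zpow_rel (fun h => h.symm) (fun h h' => h.trans h')
          (Equiv.Perm.SameCycle.refl σ) σ' hstep i u
      -- σ' fixes x and σ x is in the same σ-cycle, but not the same σ'-cycle
      have hfix : σ' x = x := by
        rw [hσ', Equiv.Perm.mul_apply, Equiv.swap_apply_right]
      have hnotsc : ¬ σ'.SameCycle x (σ x) := by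
        intro h
        exact hx ((h.eq_of_left hfix).symm)
      set F := qmap (SameCycle.setoid σ') (SameCycle.setoid σ) hle with hF
      have hnotinj : ¬ Injective F := by
        intro h
        apply hnotsc
        have heq : F (Quotient.mk _ x) = F (Quotient.mk _ (σ x)) := by
          simp only [hF, qmap_mk]
          exact quot_sound (⟨1, rfl⟩ : σ.SameCycle x (σ x))
        exact quot_exact (h heq)
      have hlt : Nat.card (Quotient (SameCycle.setoid σ)) <
          Nat.card (Quotient (SameCycle.setoid σ')) :=
        card_lt_of_surj_not_inj F (qmap_surj _ _ _) hnotinj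
      omega

lemma fixed_of_minimal {ρ : Perm (Fin n)} {l : List (Perm (Fin n))}
    (hs : ∀ t ∈ l, t.IsSwap) (hp : l.prod = ρ) (hlen : l.length = permDeg ρ)
    {x : Fin n} (hx : ρ x = x) : ∀ t ∈ l, t x = x := by
  have hcross : ∀ u v, (SameCycle.setoid ρ).r u v → (lreach l).r u v :=
    fun u v h => lreach_of_sameCycle hp h
  have h1 : Nat.card (Quotient (lreach l)) ≤ Nat.card (Quotient (SameCycle.setoid ρ)) :=
    card_quot_le _ _ hcross
  have h2 := card_lreach_ge l hs
  have h3 := permDeg_add_card_cycles_le ρ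
  -- equality of the two partitions
  have hbij : Bijective (qmap _ _ hcross) := by
    refine (Nat.bijective_iff_surjective_and_card _).mpr ⟨qmap_surj _ _ _, ?_⟩
    omega
  have hrev : ∀ u v, LReach l u v → ρ.SameCycle u v := by
    intro u v huv
    have : qmap _ _ hcross (Quotient.mk _ u) = qmap _ _ hcross (Quotient.mk _ v) := by
      simp only [qmap_mk]
      exact quot_sound huv
    exact quot_exact (hbij.injective this)
  intro t ht
  obtain ⟨a, b, hab, rfl⟩ := hs t ht
  by_contra hmove
  have hxab : x = a ∨ x = b := by
    by_contra h
    push_neg at h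
    exact hmove (Equiv.swap_apply_of_ne_of_ne h.1 h.2)
  have hreach : LReach l a b := Relation.EqvGen.rel _ _ ⟨_, ht, Equiv.swap_apply_left a b⟩
  have hsc : ρ.SameCycle a b := hrev _ _ hreach
  rcases hxab with rfl | rfl
  · exact hab (hsc.eq_of_left hx)
  · exact hab (hsc.symm.eq_of_left hx).symm
lemma iota_apply_castSucc (π : Perm (Fin n)) (i : Fin n) :
    iotaPerm n π i.castSucc = (π i).castSucc := by
  have := Equiv.Perm.viaFintypeEmbedding_apply_image π Fin.castSuccEmb i
  simpa [iotaPerm] using this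

lemma iota_apply_last (π : Perm (Fin n)) : iotaPerm n π (Fin.last n) = Fin.last n := by
  apply Equiv.Perm.viaFintypeEmbedding_apply_notMem_range
  rintro ⟨i, hi⟩
  simp only [Fin.coe_castSuccEmb] at hi
  exact absurd hi (Fin.castSucc_lt_last i).ne

lemma iota_mul (σ τ : Perm (Fin n)) :
    iotaPerm n (σ * τ) = iotaPerm n σ * iotaPerm n τ :=
  (Equiv.Perm.extendDomain_mul _ σ τ).symm

lemma iota_one : iotaPerm n (1 : Perm (Fin n)) = 1 := by
  refine Equiv.ext fun x => ?_
  refine Fin.lastCases ?_ ?_ x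
  · simpa using iota_apply_last 1
  · intro i; simpa using iota_apply_castSucc 1 i

lemma iota_inj : Injective (iotaPerm n) := fun a b h =>
  Equiv.Perm.extendDomainHom_injective Fin.castSuccEmb.toEquivRange h

lemma iota_prod (l : List (Perm (Fin n))) :
    iotaPerm n l.prod = (l.map (iotaPerm n)).prod := by
  induction l with
  | nil => simpa using iota_one
  | cons t l ih => simp [List.prod_cons, iota_mul, ih]

lemma iota_swap (a b : Fin n) :
    iotaPerm n (Equiv.swap a b) = Equiv.swap a.castSucc b.castSucc := by
  refine Equiv.ext fun x => ?_
  refine Fin.lastCases ?_ ?_ x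
  · rw [iota_apply_last,
      Equiv.swap_apply_of_ne_of_ne (Fin.castSucc_lt_last a).ne' (Fin.castSucc_lt_last b).ne']
  · intro i
    rw [iota_apply_castSucc]
    rcases eq_or_ne i a with rfl | hia
    · simp
    · rcases eq_or_ne i b with rfl | hib
      · simp
      · rw [Equiv.swap_apply_of_ne_of_ne hia hib,
          Equiv.swap_apply_of_ne_of_ne (fun h => hia (Fin.castSucc_inj.mp h))
            (fun h => hib (Fin.castSucc_inj.mp h))]

lemma iota_surj {σ : Perm (Fin (n + 1))} (hσ : σ (Fin.last n) = Fin.last n) :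
    ∃ π : Perm (Fin n), iotaPerm n π = σ := by
  have hinv : σ⁻¹ (Fin.last n) = Fin.last n := by
    apply σ.injective
    rw [Equiv.Perm.coe_inv, Equiv.apply_symm_apply, hσ]
  have hne : ∀ (τ : Perm (Fin (n + 1))), τ (Fin.last n) = Fin.last n →
      ∀ i : Fin n, τ i.castSucc ≠ Fin.last n := by
    intro τ hτ i h
    have := τ.injective (h.trans hτ.symm)
    exact absurd this (Fin.castSucc_lt_last i).ne
  refine ⟨⟨fun i => (σ i.castSucc).castPred (hne σ hσ i),
    fun i => (σ⁻¹ i.castSucc).castPred (hne σ⁻¹ hinv i), ?_, ?_⟩, ?_⟩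
  · intro i
    rw [← Fin.castSucc_inj, Fin.castSucc_castPred, Fin.castSucc_castPred,
      Equiv.Perm.coe_inv, Equiv.symm_apply_apply]
  · intro i
    rw [← Fin.castSucc_inj, Fin.castSucc_castPred, Fin.castSucc_castPred,
      Equiv.Perm.coe_inv, Equiv.apply_symm_apply]
  · refine Equiv.ext fun x => ?_
    refine Fin.lastCases ?_ ?_ x
    · rw [iota_apply_last]; exact hσ.symm
    · intro i
      rw [iota_apply_castSucc]
      show ((σ i.castSucc).castPred (hne σ hσ i)).castSucc = σ i.castSucc
      rw [Fin.castSucc_castPred]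

lemma prod_fixes {l : List (Perm (Fin n))} {x : Fin n} (h : ∀ t ∈ l, t x = x) :
    l.prod x = x := by
  induction l with
  | nil => simp
  | cons t l ih =>
    rw [List.prod_cons, Equiv.Perm.mul_apply, ih (fun s hs => h s (List.mem_cons_of_mem _ hs)),
      h t (List.mem_cons_self)]

lemma permDeg_iota (π : Perm (Fin n)) : permDeg (iotaPerm n π) = permDeg π := by
  apply le_antisymm
  · obtain ⟨l, hl1, hl2, hl3⟩ := exists_minimal_list π
    have hprod : (l.map (iotaPerm n)).prod = iotaPerm n π := by rw [← iota_prod, hl2]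
    have hswap : ∀ t ∈ l.map (iotaPerm n), t.IsSwap := by
      intro t ht
      obtain ⟨s, hs, rfl⟩ := List.mem_map.mp ht
      obtain ⟨a, b, hab, rfl⟩ := hl1 s hs
      exact ⟨a.castSucc, b.castSucc, fun h => hab (Fin.castSucc_inj.mp h), iota_swap a b⟩
    have := permDeg_le hswap hprod
    simpa [hl3] using this
  · obtain ⟨N, hN1, hN2, hN3⟩ := exists_minimal_list (iotaPerm n π)
    have hfix : ∀ t ∈ N, t (Fin.last n) = Fin.last n :=
      fixed_of_minimal hN1 hN2 hN3 (iota_apply_last π)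
    have key : ∀ (N : List (Perm (Fin (n + 1)))), (∀ t ∈ N, t.IsSwap) →
        (∀ t ∈ N, t (Fin.last n) = Fin.last n) →
        ∃ l' : List (Perm (Fin n)), (∀ s ∈ l', s.IsSwap) ∧ l'.map (iotaPerm n) = N := by
      intro N
      induction N with
      | nil => exact fun _ _ => ⟨[], by simp, rfl⟩
      | cons t N ih =>
        intro hs hf
        obtain ⟨l', hl'1, hl'2⟩ := ih (fun s hsl => hs s (List.mem_cons_of_mem _ hsl))
          (fun s hsl => hf s (List.mem_cons_of_mem _ hsl))
        obtain ⟨a, b, hab, rfl⟩ := hs t (List.mem_cons_self)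
        have hfixt := hf _ (List.mem_cons_self)
        have ha : a ≠ Fin.last n := by
          rintro rfl
          rw [Equiv.swap_apply_left] at hfixt
          exact hab hfixt.symm
        have hb : b ≠ Fin.last n := by
          rintro rfl
          rw [Equiv.swap_apply_right] at hfixt
          exact hab hfixt
        obtain ⟨a₀, rfl⟩ := Fin.exists_castSucc_eq.mpr ha
        obtain ⟨b₀, rfl⟩ := Fin.exists_castSucc_eq.mpr hb
        refine ⟨Equiv.swap a₀ b₀ :: l', ?_, ?_⟩
        · intro s hsl
          rcases List.mem_cons.mp hsl with rfl | hsl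
          · exact ⟨a₀, b₀, fun h => hab (by rw [h]), rfl⟩
          · exact hl'1 s hsl
        · rw [List.map_cons, hl'2, iota_swap]
    obtain ⟨l', hl'1, hl'2⟩ := key N hN1 hfix
    have hprod : iotaPerm n l'.prod = iotaPerm n π := by rw [iota_prod, hl'2, hN2]
    have hlen : l'.length = N.length := by rw [← hl'2, List.length_map]
    have := permDeg_le hl'1 (iota_inj hprod)
    omega

lemma cup_factor {σ τ : Perm (Fin (n + 1))}
    (h : permDeg σ + permDeg τ = permDeg (σ * τ))
    (hfix : (σ * τ) (Fin.last n) = Fin.last n) :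
    σ (Fin.last n) = Fin.last n ∧ τ (Fin.last n) = Fin.last n := by
  obtain ⟨L, hL1, hL2, hL3⟩ := exists_minimal_list σ
  obtain ⟨M, hM1, hM2, hM3⟩ := exists_minimal_list τ
  have hswap : ∀ t ∈ L ++ M, t.IsSwap := by
    intro t ht
    rcases List.mem_append.mp ht with ht | ht
    · exact hL1 t ht
    · exact hM1 t ht
  have hprod : (L ++ M).prod = σ * τ := by rw [List.prod_append, hL2, hM2]
  have hlen : (L ++ M).length = permDeg (σ * τ) := by
    rw [List.length_append, hL3, hM3, h]
  have hall := fixed_of_minimal hswap hprod hlen hfix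
  constructor
  · exact hL2 ▸ prod_fixes (fun t ht => hall t (List.mem_append_left _ ht))
  · exact hM2 ▸ prod_fixes (fun t ht => hall t (List.mem_append_right _ ht))

lemma cycleType_iota (π : Perm (Fin n)) : (iotaPerm n π).cycleType = π.cycleType :=
  Equiv.Perm.cycleType_extendDomain _

lemma sign_iota (π : Perm (Fin n)) : Equiv.Perm.sign (iotaPerm n π) = Equiv.Perm.sign π :=
  Equiv.Perm.viaFintypeEmbedding_sign π Fin.castSuccEmb
lemma iota_inv (σ : Perm (Fin n)) : iotaPerm n σ⁻¹ = (iotaPerm n σ)⁻¹ := by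
  rw [eq_inv_iff_mul_eq_one, ← iota_mul, inv_mul_cancel, iota_one]

lemma rho_apply (f : MonoidAlgebra ℤ (Equiv.Perm (Fin (n + 1)))) (π : Perm (Fin n)) :
    (rho n f).coeff π = f.coeff (iotaPerm n π) := by
  simp [rho]

lemma eps_apply {m : ℕ} (τ : Perm (Fin m)) :
    (eps m).coeff τ = ((Equiv.Perm.sign τ : ℤˣ) : ℤ) := by
  classical
  rw [eps, MonoidAlgebra.coeff_sum, Finsupp.finset_sum_apply]
  simp [MonoidAlgebra.coeff_single, Finsupp.single_apply]

lemma cup_apply {m : ℕ} (f g : MonoidAlgebra ℤ (Equiv.Perm (Fin m))) (x : Perm (Fin m)) :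
    (cup f g).coeff x = ∑ σ : Perm (Fin m), ∑ τ : Perm (Fin m),
      if permDeg σ + permDeg τ = permDeg (σ * τ) ∧ σ * τ = x then f.coeff σ * g.coeff τ else 0 := by
  classical
  rw [cup]
  rw [Finsupp.sum_fintype]
  swap
  · intro σ
    simp
  have hin : ∀ σ : Perm (Fin m), (Finsupp.sum g.coeff fun τ b =>
      if permDeg σ + permDeg τ = permDeg (σ * τ)
      then MonoidAlgebra.single (σ * τ) (f.coeff σ * b) else 0) =
      ∑ τ : Perm (Fin m), if permDeg σ + permDeg τ = permDeg (σ * τ)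
      then MonoidAlgebra.single (σ * τ) (f.coeff σ * g.coeff τ) else 0 := by
    intro σ
    rw [Finsupp.sum_fintype]
    intro τ
    simp
  simp only [hin]
  rw [MonoidAlgebra.coeff_sum, Finsupp.finset_sum_apply]
  refine Finset.sum_congr rfl fun σ _ => ?_
  rw [MonoidAlgebra.coeff_sum, Finsupp.finset_sum_apply]
  refine Finset.sum_congr rfl fun τ _ => ?_
  by_cases h1 : permDeg σ + permDeg τ = permDeg (σ * τ)
  · rw [if_pos h1, MonoidAlgebra.coeff_single, Finsupp.single_apply]
    by_cases h2 : σ * τ = x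
    · rw [if_pos h2, if_pos ⟨h1, h2⟩]
    · rw [if_neg h2, if_neg (fun hc : _ ∧ _ => h2 hc.2)]
  · rw [if_neg h1, if_neg (fun hc : _ ∧ _ => h1 hc.1)]
    simp

/-- For every `n ≥ 1`, the restriction map `ρ : C(S_n) → C(S_{n-1})` maps class
functions to class functions, is surjective, degree preserving and
multiplicative with respect to the cup product, and maps `ε_n` to `ε_{n-1}`. -/
theorem rho_properties (n : ℕ) :
    (∀ f : MonoidAlgebra ℤ (Equiv.Perm (Fin (n + 1))),
      IsClassFun f → IsClassFun (rho n f)) ∧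
    (∀ g : MonoidAlgebra ℤ (Equiv.Perm (Fin n)), IsClassFun g →
      ∃ f : MonoidAlgebra ℤ (Equiv.Perm (Fin (n + 1))),
        IsClassFun f ∧ rho n f = g) ∧
    (∀ d : ℕ, ∀ f : MonoidAlgebra ℤ (Equiv.Perm (Fin (n + 1))), IsClassFun f →
      (∀ π ∈ f.coeff.support, permDeg π = d) →
      ∀ π ∈ (rho n f).coeff.support, permDeg π = d) ∧
    (∀ f g : MonoidAlgebra ℤ (Equiv.Perm (Fin (n + 1))),
      IsClassFun f → IsClassFun g →
      rho n (cup f g) = cup (rho n f) (rho n g)) ∧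
    rho n (eps (n + 1)) = eps n := by
  classical
  refine ⟨?_, ?_, ?_, ?_, ?_⟩
  · -- class functions to class functions
    intro f hf σ π
    rw [rho_apply, rho_apply, iota_mul, iota_mul, iota_inv]
    exact hf (iotaPerm n σ) (iotaPerm n π)
  · -- surjectivity
    intro g hg
    set F : Perm (Fin (n + 1)) → ℤ :=
      fun τ => if h : ∃ π, IsConj (iotaPerm n π) τ then g.coeff h.choose else 0 with hFdef
    have hK : ∀ π π', IsConj (iotaPerm n π) (iotaPerm n π') → g.coeff π = g.coeff π' := by
      intro π π' h
      have hc : IsConj π π' := by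
        rw [Equiv.Perm.isConj_iff_cycleType_eq] at h ⊢
        rwa [cycleType_iota, cycleType_iota] at h
      obtain ⟨c, hc2⟩ := isConj_iff.mp hc
      rw [← hc2]
      exact (hg c π).symm
    have hW : ∀ τ τ', IsConj τ τ' → F τ = F τ' := by
      intro τ τ' hconj
      by_cases h : ∃ π, IsConj (iotaPerm n π) τ
      · have h' : ∃ π, IsConj (iotaPerm n π) τ' := ⟨h.choose, h.choose_spec.trans hconj⟩
        simp only [hFdef]
        rw [dif_pos h, dif_pos h']
        exact hK _ _ ((h.choose_spec.trans hconj).trans h'.choose_spec.symm)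
      · have h' : ¬ ∃ π, IsConj (iotaPerm n π) τ' :=
          fun ⟨π, hπ⟩ => h ⟨π, hπ.trans hconj.symm⟩
        simp only [hFdef]
        rw [dif_neg h, dif_neg h']
    refine ⟨MonoidAlgebra.ofCoeff (Finsupp.equivFunOnFinite.symm F), ?_, ?_⟩
    · intro σ π
      have h1 : (MonoidAlgebra.ofCoeff (Finsupp.equivFunOnFinite.symm F) : MonoidAlgebra ℤ (Perm (Fin (n + 1)))).coeff
          (σ * π * σ⁻¹) = F (σ * π * σ⁻¹) := by simp
      have h2 : (MonoidAlgebra.ofCoeff (Finsupp.equivFunOnFinite.symm F) : MonoidAlgebra ℤ (Perm (Fin (n + 1)))).coeff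
          π = F π := by simp
      rw [h1, h2]
      exact (hW π (σ * π * σ⁻¹) (isConj_iff.mpr ⟨σ, rfl⟩)).symm
    · ext π
      rw [rho_apply]
      have h1 : (MonoidAlgebra.ofCoeff (Finsupp.equivFunOnFinite.symm F) : MonoidAlgebra ℤ (Perm (Fin (n + 1)))).coeff
          (iotaPerm n π) = F (iotaPerm n π) := by simp
      rw [h1]
      have hex : ∃ π', IsConj (iotaPerm n π') (iotaPerm n π) := ⟨π, IsConj.refl _⟩
      simp only [hFdef]
      rw [dif_pos hex]
      exact hK _ _ hex.choose_spec
  · -- degree preserving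
    intro d f _ hsupp π hπ
    rw [Finsupp.mem_support_iff, rho_apply] at hπ
    have := hsupp _ (Finsupp.mem_support_iff.mpr hπ)
    rwa [permDeg_iota] at this
  · -- multiplicative
    intro f g _ _
    ext π
    rw [rho_apply, cup_apply, cup_apply]
    simp only [rho_apply]
    rw [← Fintype.sum_prod_type', ← Fintype.sum_prod_type']
    rw [← Finset.sum_filter, ← Finset.sum_filter]
    refine (Finset.sum_bij (fun q _ => (iotaPerm n q.1, iotaPerm n q.2)) ?_ ?_ ?_ ?_).symm
    · rintro ⟨σ', τ'⟩ hq
      rw [Finset.mem_filter] at hq ⊢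
      obtain ⟨-, hdeg, hprodeq⟩ := hq
      refine ⟨Finset.mem_univ _, ?_, ?_⟩
      · show permDeg (iotaPerm n σ') + permDeg (iotaPerm n τ') =
          permDeg (iotaPerm n σ' * iotaPerm n τ')
        rw [← iota_mul, permDeg_iota, permDeg_iota, permDeg_iota]
        exact hdeg
      · show iotaPerm n σ' * iotaPerm n τ' = iotaPerm n π
        rw [← iota_mul, hprodeq]
    · rintro ⟨σ1, τ1⟩ h1 ⟨σ2, τ2⟩ h2 heq
      rw [Prod.mk.injEq] at heq
      exact Prod.ext (iota_inj heq.1) (iota_inj heq.2)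
    · rintro ⟨σ, τ⟩ hp
      rw [Finset.mem_filter] at hp
      obtain ⟨-, hdeg, hprodeq⟩ := hp
      have hfixprod : (σ * τ) (Fin.last n) = Fin.last n := by
        rw [hprodeq, iota_apply_last]
      obtain ⟨hσfix, hτfix⟩ := cup_factor hdeg hfixprod
      obtain ⟨σ', rfl⟩ := iota_surj hσfix
      obtain ⟨τ', rfl⟩ := iota_surj hτfix
      refine ⟨(σ', τ'), ?_, rfl⟩
      rw [Finset.mem_filter]
      have hprod' : σ' * τ' = π := by
        apply iota_inj
        rw [iota_mul, hprodeq]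
      refine ⟨Finset.mem_univ _, ?_, hprod'⟩
      have := hdeg
      rw [← iota_mul, permDeg_iota, permDeg_iota, permDeg_iota] at this
      exact this
    · rintro ⟨σ', τ'⟩ _
      rfl
  · -- eps
    ext π
    rw [rho_apply, eps_apply, eps_apply, sign_iota]

end
end
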